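/- arXiv:1512.00118 — 2 statements merged into one kernel-verified Lean document; each statement's English description precedes it below -/
import Mathlib

section
/- Let σ be a positive n×n matrix measure on R with all moments finite, and suppose the Hilbert space L_2(R,σ) is infinite dimensional. Then the null space of vector polynomials (those with ∫⟨r, dσ r⟩ = 0) cannot contain n nonzero vector polynomials q_1,...,q_n whose heights are pairwise distinct modulo n. -/
open Polynomial

/-- The height of an `n`-dimensional vector polynomial (0-indexed components):
`h(r) = max_j (n · deg R_j + j)`, with `deg 0 = ⊥` and `h(0) = ⊥`. -/
noncomputable def height {n : ℕ} (r : Fin n → Polynomial ℂ) : WithBot ℕ :=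
  Finset.univ.sup fun j : Fin n => WithBot.map (fun d => n * d + (j : ℕ)) (r j).degree

/-- The vector polynomial `e_{nk+i}(z) = z^k e_i`; in 0-indexed form `eVP n s = z^(s/n) e_(s%n)`,
corresponding to the 1-indexed `e_{s+1}`. -/
noncomputable def eVP (n : ℕ) (s : ℕ) : Fin n → Polynomial ℂ :=
  fun j => if (j : ℕ) = s % n then X ^ (s / n) else 0

/-- A positive `n×n` matrix measure `σ` on `ℝ` with all moments finite, encoded through the
(possibly degenerate) sesquilinear form `B f g = ∫_ℝ ⟨f(t), dσ(t) g(t)⟩` it induces on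
`n`-dimensional vector polynomials (antilinear in the first argument). The axiom `mul_symm`
expresses that multiplication by the real variable `t` is symmetric for the form. -/
structure MatMeasureForm (n : ℕ) where
  B : (Fin n → Polynomial ℂ) → (Fin n → Polynomial ℂ) → ℂ
  add_right : ∀ f g h, B f (g + h) = B f g + B f h
  smul_right : ∀ (c : ℂ) f g, B f (c • g) = c * B f g
  conj_symm : ∀ f g, B g f = (starRingEnd ℂ) (B f g)
  nonneg : ∀ f, 0 ≤ (B f f).re
  mul_symm : ∀ f g, B (fun j => X * f j) g = B f (fun j => X * g j)

namespace NoNNullAux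

variable {n : ℕ} (M : MatMeasureForm n)

lemma B_zero_right (f : Fin n → Polynomial ℂ) : M.B f 0 = 0 := by
  have h := M.add_right f 0 0
  rw [add_zero] at h
  exact (add_eq_left.mp h.symm)

lemma B_zero_left (g : Fin n → Polynomial ℂ) : M.B 0 g = 0 := by
  rw [M.conj_symm, B_zero_right, map_zero]

lemma B_add_left (f g h : Fin n → Polynomial ℂ) :
    M.B (f + g) h = M.B f h + M.B g h := by
  rw [M.conj_symm h (f + g), M.add_right, map_add, ← M.conj_symm, ← M.conj_symm]

lemma B_smul_left (c : ℂ) (f g : Fin n → Polynomial ℂ) :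
    M.B (c • f) g = (starRingEnd ℂ) c * M.B f g := by
  rw [M.conj_symm g (c • f), M.smul_right, map_mul, ← M.conj_symm]

lemma B_cs (f g : Fin n → Polynomial ℂ) (h0 : M.B f f = 0) : M.B f g = 0 := by
  by_contra hw
  set w := M.B f g with hwdef
  have hns : Complex.normSq w ≠ 0 := by simpa [Complex.normSq_eq_zero] using hw
  set t : ℝ := ((M.B g g).re + 1) / Complex.normSq w with htdef
  set c : ℂ := -(t : ℂ) * w with hcdef
  have hexp : M.B (g + c • f) (g + c • f)
      = M.B g g + c * (starRingEnd ℂ) w + (starRingEnd ℂ) c * w := by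
    rw [M.add_right, B_add_left, B_add_left, M.smul_right, M.smul_right,
      B_smul_left, B_smul_left, h0, M.conj_symm f g, ← hwdef]
    ring
  have hcw : c * (starRingEnd ℂ) w + (starRingEnd ℂ) c * w
      = (((-2 : ℝ) * ((M.B g g).re + 1) : ℝ) : ℂ) := by
    rw [hcdef]
    rw [map_mul, map_neg, Complex.conj_ofReal]
    have h1 : w * (starRingEnd ℂ) w = (Complex.normSq w : ℂ) := Complex.mul_conj w
    have h2 : (starRingEnd ℂ) w * w = (Complex.normSq w : ℂ) := by
      rw [mul_comm]; exact Complex.mul_conj w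
    have h3 : (t : ℂ) * (Complex.normSq w : ℂ) = (((M.B g g).re + 1 : ℝ) : ℂ) := by
      have hns' : ((Complex.normSq w : ℝ) : ℂ) ≠ 0 := by exact_mod_cast hns
      rw [htdef]
      push_cast
      rw [div_mul_cancel₀ _ hns']
    calc -(t:ℂ) * w * (starRingEnd ℂ) w + -(t:ℂ) * (starRingEnd ℂ) w * w
        = -((t:ℂ) * (w * (starRingEnd ℂ) w)) + -((t:ℂ) * ((starRingEnd ℂ) w * w)) := by ring
      _ = (((-2 : ℝ) * ((M.B g g).re + 1) : ℝ) : ℂ) := by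
          rw [h1, h2, h3]; push_cast; ring
  have hge := M.nonneg (g + c • f)
  rw [hexp] at hge
  have hre : (M.B g g + c * (starRingEnd ℂ) w + (starRingEnd ℂ) c * w).re
      = (M.B g g).re + ((-2 : ℝ) * ((M.B g g).re + 1)) := by
    rw [add_assoc, Complex.add_re, hcw, Complex.ofReal_re]
  rw [hre] at hge
  have := M.nonneg g
  linarith

lemma B_pow_symm : ∀ (l : ℕ) (f g : Fin n → Polynomial ℂ),
    M.B (fun i => X ^ l * f i) g = M.B f (fun i => X ^ l * g i) := by
  intro l
  induction l with
  | zero => intro f g; simp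
  | succ l ih =>
    intro f g
    have h1 : (fun i => X ^ (l + 1) * f i) = (fun i => X ^ l * (X * f i)) := by
      funext i; ring
    have h2 : (fun i => X ^ (l + 1) * g i) = (fun i => X * (X ^ l * g i)) := by
      funext i; ring
    rw [h1, ih (fun i => X * f i) g, M.mul_symm, h2]

lemma map_natCast (f : ℕ → ℕ) (a : ℕ) :
    WithBot.map f ((a : ℕ) : WithBot ℕ) = ((f a : ℕ) : WithBot ℕ) := by
  rw [Nat.cast_withBot, Nat.cast_withBot, WithBot.map_coe]

lemma height_exists {r : Fin n → Polynomial ℂ} (hr : r ≠ 0) :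
    ∃ a : ℕ, height r = (a : WithBot ℕ) := by
  obtain ⟨j, hj⟩ : ∃ j, r j ≠ 0 := by
    by_contra h; push_neg at h; exact hr (funext h)
  have hdeg : (r j).degree = ((r j).natDegree : WithBot ℕ) := degree_eq_natDegree hj
  have hle : ((n * (r j).natDegree + (j : ℕ) : ℕ) : WithBot ℕ) ≤ height r := by
    have h1 := Finset.le_sup (f := fun j : Fin n =>
      WithBot.map (fun d => n * d + (j : ℕ)) (r j).degree) (Finset.mem_univ j)
    have h2 : WithBot.map (fun d => n * d + (j : ℕ)) (r j).degree ≤ height r := h1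
    rwa [hdeg, map_natCast] at h2
  have hne : height r ≠ ⊥ := by
    intro h
    rw [h, Nat.cast_withBot] at hle
    exact absurd hle (WithBot.not_coe_le_bot _)
  obtain ⟨a, ha⟩ := WithBot.ne_bot_iff_exists.mp hne
  exact ⟨a, ha.symm⟩

lemma height_spec (hn : 0 < n) {r : Fin n → Polynomial ℂ} {d : ℕ}
    (h : height r = (d : WithBot ℕ)) :
    (r ⟨d % n, Nat.mod_lt _ hn⟩).degree = ((d / n : ℕ) : WithBot ℕ) ∧
    ∀ i : Fin n, (i : ℕ) ≠ d % n →
      WithBot.map (fun k => n * k + (i : ℕ)) (r i).degree < (d : WithBot ℕ) := by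
  have h' : (Finset.univ.sup fun j : Fin n =>
      WithBot.map (fun k => n * k + (j : ℕ)) (r j).degree) = (d : WithBot ℕ) := h
  have hne : (Finset.univ : Finset (Fin n)).Nonempty := by
    have : Nonempty (Fin n) := Fin.pos_iff_nonempty.mp hn
    exact Finset.univ_nonempty
  obtain ⟨j₀, -, hj₀⟩ := Finset.exists_mem_eq_sup Finset.univ hne
    (fun j : Fin n => WithBot.map (fun k => n * k + (j : ℕ)) (r j).degree)
  have hj : WithBot.map (fun k => n * k + (j₀ : ℕ)) (r j₀).degree = (d : WithBot ℕ) := by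
    rw [← hj₀, h']
  have hj0ne : r j₀ ≠ 0 := by
    intro h0; rw [h0] at hj; simp [degree_zero] at hj
  have hdeg : (r j₀).degree = ((r j₀).natDegree : WithBot ℕ) := degree_eq_natDegree hj0ne
  rw [hdeg, map_natCast] at hj
  have hd : n * (r j₀).natDegree + (j₀ : ℕ) = d := by exact_mod_cast hj
  have hmod : d % n = (j₀ : ℕ) := by
    rw [← hd, Nat.mul_add_mod, Nat.mod_eq_of_lt j₀.isLt]
  have hdiv : d / n = (r j₀).natDegree := by
    rw [← hd, Nat.mul_add_div hn, Nat.div_eq_of_lt j₀.isLt, add_zero]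
  constructor
  · have hj₀eq : (⟨d % n, Nat.mod_lt _ hn⟩ : Fin n) = j₀ := Fin.ext hmod
    rw [hj₀eq, hdeg, hdiv]
  · intro i hi
    have hle : WithBot.map (fun k => n * k + (i : ℕ)) (r i).degree ≤ (d : WithBot ℕ) := by
      have h1 := Finset.le_sup (f := fun j : Fin n =>
        WithBot.map (fun k => n * k + (j : ℕ)) (r j).degree) (Finset.mem_univ i)
      have h2 : WithBot.map (fun k => n * k + (i : ℕ)) (r i).degree ≤ height r := h1
      exact le_trans h2 (le_of_eq h)
    refine lt_of_le_of_ne hle ?_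
    intro heq
    rcases eq_or_ne (r i) 0 with h0 | h0
    · rw [h0] at heq; simp [degree_zero] at heq
    · rw [degree_eq_natDegree h0, map_natCast] at heq
      have : n * (r i).natDegree + (i : ℕ) = d := by exact_mod_cast heq
      apply hi
      rw [← this, Nat.mul_add_mod, Nat.mod_eq_of_lt i.isLt]

lemma height_eVP (hn : 0 < n) (s : ℕ) : height (eVP n s) = (s : WithBot ℕ) := by
  apply le_antisymm
  · apply Finset.sup_le
    intro i _
    by_cases hi : (i : ℕ) = s % n
    · have h1 : (eVP n s) i = X ^ (s / n) := by simp [eVP, hi]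
      rw [h1, degree_X_pow, map_natCast, hi]
      exact_mod_cast le_of_eq (Nat.div_add_mod s n)
    · simp [eVP, hi]
  · have h1 : (eVP n s) ⟨s % n, Nat.mod_lt _ hn⟩ = X ^ (s / n) := by simp [eVP]
    have h0 := Finset.le_sup (f := fun j : Fin n =>
      WithBot.map (fun d => n * d + (j : ℕ)) ((eVP n s) j).degree)
      (Finset.mem_univ (⟨s % n, Nat.mod_lt _ hn⟩ : Fin n))
    have h2 : WithBot.map (fun d => n * d + (s % n))
        ((eVP n s) ⟨s % n, Nat.mod_lt _ hn⟩).degree ≤ height (eVP n s) := h0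
    rw [h1, degree_X_pow, map_natCast] at h2
    have h3 : ((n * (s / n) + s % n : ℕ) : WithBot ℕ) ≤ height (eVP n s) := h2
    rwa [Nat.div_add_mod] at h3

lemma height_pow_mul (hn : 0 < n) {g : Fin n → Polynomial ℂ} {d : ℕ}
    (hg : height g = (d : WithBot ℕ)) (l : ℕ) :
    height (fun i => X ^ l * g i) = ((n * l + d : ℕ) : WithBot ℕ) := by
  obtain ⟨hdeg, -⟩ := height_spec hn hg
  apply le_antisymm
  · apply Finset.sup_le
    intro i _
    rcases eq_or_ne (g i) 0 with h0 | h0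
    · simp [h0]
    · have hle : WithBot.map (fun k => n * k + (i : ℕ)) (g i).degree ≤ (d : WithBot ℕ) := by
        have h1 := Finset.le_sup (f := fun j : Fin n =>
          WithBot.map (fun k => n * k + (j : ℕ)) (g j).degree) (Finset.mem_univ i)
        have h2 : WithBot.map (fun k => n * k + (i : ℕ)) (g i).degree ≤ height g := h1
        exact le_trans h2 (le_of_eq hg)
      rw [degree_eq_natDegree h0, map_natCast] at hle
      have hle' : n * (g i).natDegree + (i : ℕ) ≤ d := by exact_mod_cast hle
      have hXl : (X ^ l * g i).degree = ((l + (g i).natDegree : ℕ) : WithBot ℕ) := by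
        rw [degree_mul, degree_X_pow, degree_eq_natDegree h0, ← Nat.cast_add]
      show WithBot.map (fun k => n * k + (i : ℕ)) (X ^ l * g i).degree
          ≤ ((n * l + d : ℕ) : WithBot ℕ)
      rw [hXl, map_natCast]
      have harith : n * (l + (g i).natDegree) + (i : ℕ) ≤ n * l + d := by
        rw [Nat.mul_add]; omega
      exact_mod_cast harith
  · set j₀ : Fin n := ⟨d % n, Nat.mod_lt _ hn⟩
    have hne : g j₀ ≠ 0 := by
      intro h0; rw [h0] at hdeg; simp [degree_zero] at hdeg
    have h1 : (X ^ l * g j₀).degree = ((l + d / n : ℕ) : WithBot ℕ) := by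
      rw [degree_mul, degree_X_pow, hdeg, ← Nat.cast_add]
    have h0 := Finset.le_sup (f := fun j : Fin n =>
      WithBot.map (fun k => n * k + (j : ℕ)) ((fun i => X ^ l * g i) j).degree)
      (Finset.mem_univ j₀)
    have h2 : WithBot.map (fun k => n * k + ((j₀ : Fin n) : ℕ)) (X ^ l * g j₀).degree
        ≤ height (fun i => X ^ l * g i) := h0
    rw [h1, map_natCast] at h2
    have h3 : ((n * (l + d / n) + d % n : ℕ) : WithBot ℕ)
        ≤ height (fun i => X ^ l * g i) := h2
    have heq : n * (l + d / n) + d % n = n * l + d := by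
      have hdm := Nat.div_add_mod d n
      rw [Nat.mul_add]
      omega
    rwa [heq] at h3

lemma sub_top (hn : 0 < n) {r g : Fin n → Polynomial ℂ} {d : ℕ}
    (hr : height r = (d : WithBot ℕ)) (hg : height g = (d : WithBot ℕ)) :
    ∃ c : ℂ, height (r - c • g) < (d : WithBot ℕ) := by
  set j₀ : Fin n := ⟨d % n, Nat.mod_lt _ hn⟩ with hj₀def
  obtain ⟨hr1, hr2⟩ := height_spec hn hr
  obtain ⟨hg1, hg2⟩ := height_spec hn hg
  have hgne : g j₀ ≠ 0 := by intro h; rw [← hj₀def] at hg1; rw [h] at hg1; simp at hg1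
  have hrne : r j₀ ≠ 0 := by intro h; rw [← hj₀def] at hr1; rw [h] at hr1; simp at hr1
  rw [← hj₀def] at hr1 hg1
  set c : ℂ := (r j₀).leadingCoeff / (g j₀).leadingCoeff with hcdef
  have hc : c ≠ 0 := div_ne_zero (leadingCoeff_ne_zero.mpr hrne) (leadingCoeff_ne_zero.mpr hgne)
  refine ⟨c, ?_⟩
  have hbot : (⊥ : WithBot ℕ) < (d : WithBot ℕ) := WithBot.bot_lt_coe d
  refine (Finset.sup_lt_iff hbot).mpr ?_
  intro i _
  have hcomp : (r - c • g) i = r i - c • g i := rfl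
  by_cases hi : i = j₀
  · rw [hi]
    have hcomp' : (r - c • g) j₀ = r j₀ - c • g j₀ := rfl
    have hcg : (c • g j₀) = C c * g j₀ := smul_eq_C_mul c
    have h1 : (c • g j₀).degree = (r j₀).degree := by
      rw [hcg, degree_C_mul hc, hg1, hr1]
    have h2 : (r j₀).leadingCoeff = (c • g j₀).leadingCoeff := by
      rw [hcg, leadingCoeff_mul, leadingCoeff_C, hcdef,
        div_mul_cancel₀ _ (leadingCoeff_ne_zero.mpr hgne)]
    have hsub := degree_sub_lt h1.symm hrne h2
    rw [hr1] at hsub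
    rw [hcomp']
    rcases eq_or_ne (r j₀ - c • g j₀) 0 with h0 | h0
    · rw [h0]; simpa using hbot
    · rw [degree_eq_natDegree h0] at hsub ⊢
      rw [map_natCast]
      have hk : (r j₀ - c • g j₀).natDegree < d / n := by exact_mod_cast hsub
      have hval : (j₀ : ℕ) = d % n := rfl
      have hlt : n * (r j₀ - c • g j₀).natDegree + (j₀ : ℕ) < d := by
        rw [hval]
        have h3 := Nat.div_add_mod d n
        have h4 : n * (r j₀ - c • g j₀).natDegree < n * (d / n) :=
          mul_lt_mul_of_pos_left hk hn
        omega
      exact_mod_cast hlt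
  · have hi' : (i : ℕ) ≠ d % n := fun h => hi (Fin.ext h)
    have h1 := hr2 i hi'
    have h2 := hg2 i hi'
    have hmono : Monotone (WithBot.map fun k => n * k + (i : ℕ)) :=
      WithBot.monotone_map_iff.mpr
        (fun a b hab => Nat.add_le_add_right (Nat.mul_le_mul_left n hab) _)
    have hd : (r i - c • g i).degree ≤ max (r i).degree (g i).degree :=
      le_trans (degree_sub_le _ _)
        (max_le_max le_rfl (degree_smul_le c (g i)))
    calc WithBot.map (fun k => n * k + (i : ℕ)) ((r - c • g) i).degree
        ≤ WithBot.map (fun k => n * k + (i : ℕ)) (max (r i).degree (g i).degree) := by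
          rw [hcomp]; exact hmono hd
      _ = max (WithBot.map (fun k => n * k + (i : ℕ)) (r i).degree)
            (WithBot.map (fun k => n * k + (i : ℕ)) (g i).degree) := hmono.map_max
      _ < (d : WithBot ℕ) := max_lt h1 h2

lemma mem_span (hn : 0 < n) (q : Fin n → (Fin n → Polynomial ℂ)) (a : Fin n → ℕ)
    (ha : ∀ j, height (q j) = (a j : WithBot ℕ))
    (hsur : ∀ d : ℕ, Finset.univ.sup a < d → ∃ j l, n * l + a j = d)
    (r : Fin n → Polynomial ℂ) :
    r ∈ Submodule.span ℂ
        (((Finset.range (Finset.univ.sup a + 1)).image (eVP n) : Finset _) :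
          Set (Fin n → Polynomial ℂ)) ⊔
      Submodule.span ℂ {x | ∃ j l, x = fun i => X ^ l * q j i} := by
  set H := Finset.univ.sup a + 1 with hHdef
  set S := Submodule.span ℂ
        (((Finset.range H).image (eVP n) : Finset _) : Set (Fin n → Polynomial ℂ)) ⊔
      Submodule.span ℂ {x | ∃ j l, x = fun i => X ^ l * q j i} with hSdef
  have key : ∀ d : ℕ, ∀ r : Fin n → Polynomial ℂ, height r < (d : WithBot ℕ) → r ∈ S := by
    intro d
    induction d using Nat.strong_induction_on with
    | _ d ih =>
      intro r hr
      rcases eq_or_ne r 0 with rfl | hr0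
      · exact zero_mem S
      obtain ⟨e, he⟩ := NoNNullAux.height_exists hr0
      have hed : e < d := by
        rw [he] at hr
        exact_mod_cast hr
      by_cases hcase : e < H
      · obtain ⟨c, hc⟩ := NoNNullAux.sub_top hn he (NoNNullAux.height_eVP hn e)
        have h1 : r - c • eVP n e ∈ S := ih e hed _ hc
        have h2 : eVP n e ∈ S := by
          apply Submodule.mem_sup_left
          apply Submodule.subset_span
          simp only [Finset.coe_image, Set.mem_image, Finset.mem_coe, Finset.mem_range]
          exact ⟨e, hcase, rfl⟩
        have h3 := S.add_mem h1 (S.smul_mem c h2)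
        rwa [sub_add_cancel] at h3
      · push_neg at hcase
        obtain ⟨j, l, hjl⟩ := hsur e (by omega)
        have hg : height (fun i => X ^ l * q j i) = (e : WithBot ℕ) := by
          rw [NoNNullAux.height_pow_mul hn (ha j) l, hjl]
        obtain ⟨c, hc⟩ := NoNNullAux.sub_top hn he hg
        have h1 := ih e hed _ hc
        have h2 : (fun i => X ^ l * q j i) ∈ S := by
          apply Submodule.mem_sup_right
          exact Submodule.subset_span ⟨j, l, rfl⟩
        have h3 := S.add_mem h1 (S.smul_mem c h2)
        rwa [sub_add_cancel] at h3
  rcases eq_or_ne r 0 with rfl | hr0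
  · exact zero_mem S
  obtain ⟨e, he⟩ := NoNNullAux.height_exists hr0
  exact key (e + 1) r (by rw [he]; exact_mod_cast Nat.lt_succ_self e)

end NoNNullAux

/-- If `L_2(ℝ,σ)` is infinite dimensional (for every `N` the polynomials contain an
`N`-dimensional family which is linearly independent modulo the null space), then the null space
cannot contain `n` nonzero null vector polynomials whose heights are pairwise distinct mod `n`. -/
theorem no_n_null_generators (n : ℕ) (M : MatMeasureForm n)
    (hinf : ∀ N : ℕ, ∃ p : Fin N → (Fin n → Polynomial ℂ), ∀ c : Fin N → ℂ,
      M.B (∑ i, c i • p i) (∑ i, c i • p i) = 0 → ∀ i, c i = 0) :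
    ¬ ∃ q : Fin n → (Fin n → Polynomial ℂ),
        (∀ j, q j ≠ 0) ∧ (∀ j, M.B (q j) (q j) = 0) ∧
        (∀ i j, i ≠ j → ∀ a b : ℕ, height (q i) = (a : WithBot ℕ) →
          height (q j) = (b : WithBot ℕ) → ¬ (a % n = b % n)) := by
  rintro ⟨q, hq0, hqnull, hdist⟩
  rcases Nat.eq_zero_or_pos n with rfl | hn
  · obtain ⟨p, hp⟩ := hinf 1
    have hzero : (∑ i, (fun _ : Fin 1 => (1 : ℂ)) i • p i) = 0 := by
      funext i; exact i.elim0
    have h1 := hp (fun _ => 1) (by rw [hzero]; exact NoNNullAux.B_zero_right M 0) 0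
    exact one_ne_zero h1
  · choose a ha using fun j => NoNNullAux.height_exists (hq0 j)
    set H := Finset.univ.sup a + 1 with hHdef
    have hsur : ∀ d : ℕ, Finset.univ.sup a < d → ∃ j l, n * l + a j = d := by
      intro d hd
      have hinj : Function.Injective
          (fun j : Fin n => (⟨a j % n, Nat.mod_lt _ hn⟩ : Fin n)) := by
        intro i j hij
        by_contra hne
        exact hdist i j hne (a i) (a j) (ha i) (ha j)
          (by simpa [Fin.ext_iff] using hij)
      have hsurj : Function.Surjective
          (fun j : Fin n => (⟨a j % n, Nat.mod_lt _ hn⟩ : Fin n)) :=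
        Finite.surjective_of_injective hinj
      obtain ⟨j, hj⟩ := hsurj ⟨d % n, Nat.mod_lt _ hn⟩
      have hmod : a j % n = d % n := by simpa [Fin.ext_iff] using hj
      have hle : a j ≤ d :=
        le_trans (Finset.le_sup (Finset.mem_univ j)) (le_of_lt hd)
      have hdvd : n ∣ d - a j := (Nat.modEq_iff_dvd' hle).mp hmod
      obtain ⟨l, hl⟩ := hdvd
      exact ⟨j, l, by omega⟩
    obtain ⟨p, hp⟩ := hinf (H + 1)
    set U := Submodule.span ℂ
        (((Finset.range H).image (eVP n) : Finset _) : Set (Fin n → Polynomial ℂ))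
      with hUdef
    set W := Submodule.span ℂ
        {x : Fin n → Polynomial ℂ | ∃ j l, x = fun i => X ^ l * q j i} with hWdef
    have hmem : ∀ i, p i ∈ U ⊔ W :=
      fun i => NoNNullAux.mem_span hn q a ha hsur (p i)
    choose y hy z hz hyz using fun i => Submodule.mem_sup.mp (hmem i)
    have hdep : ¬ LinearIndependent ℂ (fun i : Fin (H + 1) => (⟨y i, hy i⟩ : U)) := by
      intro hli
      have hcard := hli.fintype_card_le_finrank
      rw [Fintype.card_fin] at hcard
      have h2 : Module.finrank ℂ U ≤ H := by
        refine le_trans (finrank_span_finset_le_card _) ?_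
        exact le_trans Finset.card_image_le (by simp)
      omega
    obtain ⟨c, hcsum, i₀, hi₀⟩ := Fintype.not_linearIndependent_iff.mp hdep
    have hysum : ∑ i, c i • y i = 0 := by
      have h1 := congrArg (Submodule.subtype U) hcsum
      simpa using h1
    have hfW : (∑ i, c i • p i) ∈ W := by
      have hsplit : ∑ i, c i • p i = ∑ i, c i • y i + ∑ i, c i • z i := by
        rw [← Finset.sum_add_distrib]
        apply Finset.sum_congr rfl
        intro i _
        rw [← smul_add, hyz i]
      rw [hsplit, hysum, zero_add]
      exact Submodule.sum_mem _ (fun i _ => W.smul_mem _ (hz i))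
    let P : Submodule ℂ (Fin n → Polynomial ℂ) :=
      { carrier := {g | ∀ h, M.B g h = 0}
        add_mem' := by
          intro x y hx hy h
          rw [NoNNullAux.B_add_left, hx, hy, add_zero]
        zero_mem' := fun h => NoNNullAux.B_zero_left M h
        smul_mem' := by
          intro c x hx h
          rw [NoNNullAux.B_smul_left, hx, mul_zero] }
    have hWP : W ≤ P := by
      rw [hWdef]
      apply Submodule.span_le.mpr
      rintro x ⟨j, l, rfl⟩ h
      rw [NoNNullAux.B_pow_symm]
      exact NoNNullAux.B_cs M (q j) _ (hqnull j)
    have hnull : M.B (∑ i, c i • p i) (∑ i, c i • p i) = 0 := hWP hfW _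
    exact hi₀ (hp c hnull i₀)
end

section
/- Suppose {p_k}_{k=1}^∞ is a sequence of n-dimensional vector polynomials orthonormal in L_2(R,σ) for a positive matrix measure σ with finite moments, and {q_j}_{j=1}^{j_0} are null vector polynomials such that every vector polynomial is a finite linear combination of {p_k} ∪ {z^l q_j : l ≥ 0, j ≤ j_0}. Then every vector polynomial r in the zero equivalence class of L_2(R,σ) can be written as r(z) = Σ_{j=1}^{j_0} R_j(z) q_j(z) for scalar polynomials R_j. -/
open Polynomial

namespace MatMeasureForm
variable {n : ℕ} (M : MatMeasureForm n)

lemma zero_right (f : Fin n → Polynomial ℂ) : M.B f 0 = 0 := by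
  have h := M.smul_right 0 f 0
  simpa using h

lemma sum_right {ι : Type*} (s : Finset ι) (f : Fin n → Polynomial ℂ)
    (g : ι → Fin n → Polynomial ℂ) :
    M.B f (∑ j ∈ s, g j) = ∑ j ∈ s, M.B f (g j) := by
  classical
  induction s using Finset.induction with
  | empty => simpa using M.zero_right f
  | insert _ _ h ih => rw [Finset.sum_insert h, Finset.sum_insert h, M.add_right, ih]

lemma null_orth (f g : Fin n → Polynomial ℂ) (hg : M.B g g = 0) : M.B f g = 0 := by
  by_contra hb
  set b := M.B f g with hbdef
  obtain ⟨t, htb⟩ : ∃ t : ℝ, t * Complex.normSq b = ((M.B f f).re + 1) / 2 := by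
    refine ⟨(((M.B f f).re + 1) / 2) / Complex.normSq b, ?_⟩
    have hnsq : Complex.normSq b ≠ 0 := by simpa [Complex.normSq_eq_zero] using hb
    field_simp
  set c : ℂ := -(t : ℂ) * (starRingEnd ℂ) b with hc
  have h2 : M.B (f + c • g) g = b := by
    rw [M.conj_symm g (f + c • g), M.add_right, M.smul_right, M.conj_symm f g, hg, ← hbdef]
    simp
  have h1 : M.B (f + c • g) f
      = (starRingEnd ℂ) (M.B f f) + (starRingEnd ℂ) (c * b) := by
    rw [M.conj_symm f (f + c • g), M.add_right, M.smul_right, ← hbdef]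
    simp [map_add, map_mul, mul_comm]
  have key : M.B (f + c • g) (f + c • g)
      = (starRingEnd ℂ) (M.B f f) + (starRingEnd ℂ) (c * b) + c * b := by
    rw [M.add_right, M.smul_right, h1, h2]
  have hcb : c * b = ((-(t * Complex.normSq b) : ℝ) : ℂ) := by
    have hmc : (starRingEnd ℂ) b * b = ((Complex.normSq b : ℝ) : ℂ) := by
      rw [mul_comm, Complex.mul_conj]
    rw [hc, mul_assoc, hmc]
    push_cast
    ring
  rw [htb] at hcb
  have hre := M.nonneg (f + c • g)
  rw [key, hcb, Complex.conj_ofReal] at hre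
  simp only [Complex.add_re, Complex.conj_re, Complex.ofReal_re] at hre
  linarith

lemma null_add (f g : Fin n → Polynomial ℂ) (hf : M.B f f = 0) (hg : M.B g g = 0) :
    M.B (f + g) (f + g) = 0 := by
  rw [M.add_right, M.conj_symm f (f + g), M.add_right, M.conj_symm g (f + g), M.add_right,
    hf, hg, M.null_orth f g hg, M.null_orth g f hf]
  simp

lemma null_smul (a : ℂ) (f : Fin n → Polynomial ℂ) (hf : M.B f f = 0) :
    M.B (a • f) (a • f) = 0 := by
  rw [M.smul_right, M.conj_symm f (a • f), M.smul_right, hf]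
  simp

lemma null_mulX (f : Fin n → Polynomial ℂ) (hf : M.B f f = 0) :
    M.B (fun j => X * f j) (fun j => X * f j) = 0 := by
  rw [M.mul_symm f (fun j => X * f j), M.conj_symm (fun j => X * (X * f j)) f,
    M.null_orth _ f hf]
  simp

lemma null_polymul (R : Polynomial ℂ) (f : Fin n → Polynomial ℂ) (hf : M.B f f = 0) :
    M.B (fun j => R * f j) (fun j => R * f j) = 0 := by
  induction R using Polynomial.induction_on with
  | C a =>
      have : (fun j => C a * f j) = a • f := by
        funext j; simp [Polynomial.smul_eq_C_mul]
      rw [this]; exact M.null_smul a f hf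
  | add p q hp hq =>
      have : (fun j => (p + q) * f j) = (fun j => p * f j) + (fun j => q * f j) := by
        funext j; simp [add_mul]
      rw [this]; exact M.null_add _ _ hp hq
  | monomial m a hm =>
      have : (fun j => C a * X ^ (m + 1) * f j) = fun j => X * (C a * X ^ m * f j) := by
        funext j; ring_nf
      rw [this]; exact M.null_mulX _ hm

lemma null_sum {ι : Type*} (s : Finset ι) (g : ι → Fin n → Polynomial ℂ)
    (hg : ∀ j ∈ s, M.B (g j) (g j) = 0) :
    M.B (∑ j ∈ s, g j) (∑ j ∈ s, g j) = 0 := by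
  classical
  induction s using Finset.induction with
  | empty => simpa using M.zero_right 0
  | insert _ _ h ih =>
      rw [Finset.sum_insert h]
      exact M.null_add _ _ (hg _ (Finset.mem_insert_self _ _))
        (ih fun j hj => hg j (Finset.mem_insert_of_mem hj))

end MatMeasureForm

/-- If `{p_k}` is orthonormal in `L_2(ℝ,σ)`, the `q_j` are null, and every vector polynomial is a
finite linear combination of the `p_k` and the `z^l q_j`, then every vector polynomial in the zero
equivalence class is `∑_j R_j(z) q_j(z)` for scalar polynomials `R_j`. -/
theorem null_class_generated_by_q (n j0 : ℕ) (M : MatMeasureForm n)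
    (p : ℕ → (Fin n → Polynomial ℂ)) (q : Fin j0 → (Fin n → Polynomial ℂ))
    (horth : ∀ k l : ℕ, M.B (p k) (p l) = if k = l then 1 else 0)
    (hqnull : ∀ j, M.B (q j) (q j) = 0)
    (hspan : ∀ r : Fin n → Polynomial ℂ, ∃ (K : Finset ℕ) (c : ℕ → ℂ)
      (R : Fin j0 → Polynomial ℂ),
      r = (∑ k ∈ K, c k • p k) + fun i => ∑ j, R j * q j i) :
    ∀ r : Fin n → Polynomial ℂ, M.B r r = 0 →
      ∃ R : Fin j0 → Polynomial ℂ, r = fun i => ∑ j, R j * q j i := by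
  intro r hr0
  obtain ⟨K, c, R, hr⟩ := hspan r
  have hgsum : (fun i => ∑ j, R j * q j i) = ∑ j : Fin j0, (fun i => R j * q j i) := by
    funext i; simp
  have hgnull : M.B (fun i => ∑ j, R j * q j i) (fun i => ∑ j, R j * q j i) = 0 := by
    rw [hgsum]
    exact M.null_sum _ _ fun j _ => M.null_polymul (R j) (q j) (hqnull j)
  have hck : ∀ k ∈ K, c k = 0 := by
    intro k hk
    have h1 : M.B (p k) r = 0 := M.null_orth _ _ hr0
    rw [hr, M.add_right, M.sum_right, M.null_orth _ _ hgnull, add_zero] at h1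
    simp only [M.smul_right, horth, mul_ite, mul_one, mul_zero] at h1
    rwa [Finset.sum_ite_eq K k c, if_pos hk] at h1
  refine ⟨R, ?_⟩
  rw [hr, Finset.sum_eq_zero fun k hk => by rw [hck k hk, zero_smul], zero_add]
end
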